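/- For every n ≥ 1, the QBF KBKF_n is false, i.e., the quantified formula ∃x_1 y_1 ∀a_1 … ∃x_n y_n ∀a_n ∃z_1 … z_n. φ_n evaluates to false, where φ_n is the conjunction of the KBKF_n clauses. -/
import Mathlib


/-! Generic framework for QBFs in prenex CNF. -/

inductive Q
  | ex
  | all
deriving DecidableEq

abbrev Lit (V : Type) := V × Bool
abbrev Clause (V : Type) := Finset (Lit V)
abbrev Cnf (V : Type) := Finset (Clause V)
abbrev QPrefix (V : Type) := List (Q × V)

variable {V : Type} [DecidableEq V]

/-- Negation of a literal. -/
def negLit (l : Lit V) : Lit V := (l.1, !l.2)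

/-- Evaluation of a literal under an assignment. -/
def evalLit (τ : V → Bool) (l : Lit V) : Bool := if l.2 then τ l.1 else !(τ l.1)

/-- An assignment satisfies a clause if some literal evaluates to true. -/
def SatClause (τ : V → Bool) (C : Clause V) : Prop := ∃ l ∈ C, evalLit τ l = true

/-- An assignment satisfies a CNF if it satisfies all clauses. -/
def SatCnf (τ : V → Bool) (φ : Cnf V) : Prop := ∀ C ∈ φ, SatClause τ C

/-- Recursive semantics of a quantifier prefix over a matrix predicate. -/
def QTrue : QPrefix V → (V → Bool) → ((V → Bool) → Prop) → Prop
  | [], τ, M => M τ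
  | (Q.ex, v) :: P, τ, M => ∃ b, QTrue P (Function.update τ v b) M
  | (Q.all, v) :: P, τ, M => ∀ b, QTrue P (Function.update τ v b) M

/-- Truth of a prenex CNF QBF (closed; the default assignment is irrelevant). -/
def QBFTrue (P : QPrefix V) (φ : Cnf V) : Prop :=
  QTrue P (fun _ => false) (fun τ => SatCnf τ φ)

/-- Two variables are in the same quantifier block of a prefix. -/
def SameBlock (P : QPrefix V) (v w : V) : Prop :=
  ∃ i j : ℕ, (∃ q : Q, P[i]? = some (q, v)) ∧ (∃ q : Q, P[j]? = some (q, w)) ∧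
    ∀ (k₁ k₂ : ℕ) (e₁ e₂ : Q × V), min i j ≤ k₁ → k₁ ≤ k₂ → k₂ ≤ max i j →
      P[k₁]? = some e₁ → P[k₂]? = some e₂ → e₁.1 = e₂.1

/-- An admissible literal map for a prefix: a bijection on literals commuting with
negation and moving variables only within their quantifier block. -/
structure Admissible (P : QPrefix V) (σ : Lit V → Lit V) : Prop where
  bij : Function.Bijective σ
  neg : ∀ l, σ (negLit l) = negLit (σ l)
  block : ∀ v w b c, σ (v, b) = (w, c) → v ≠ w → SameBlock P v w

/-- Action of a literal map on a clause. -/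
def mapClause (σ : Lit V → Lit V) (C : Clause V) : Clause V := C.image σ

/-- A (syntactic) symmetry of a QBF: an admissible map sending the clause set to itself. -/
def IsSymmetry (P : QPrefix V) (φ : Cnf V) (σ : Lit V → Lit V) : Prop :=
  Admissible P σ ∧ φ.image (mapClause σ) = φ

def IsExist (P : QPrefix V) (v : V) : Prop := (Q.ex, v) ∈ P
def IsUniv (P : QPrefix V) (v : V) : Prop := (Q.all, v) ∈ P

/-- A clause is a tautology if it contains complementary literals. -/
def Tauto (C : Clause V) : Prop := ∃ l ∈ C, negLit l ∈ C

/-- Rule R of Q-Res: resolution over an existential variable, with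
non-tautological resolvent. -/
def ResStep (P : QPrefix V) (E₁ E₂ E : Clause V) : Prop :=
  ∃ x, IsExist P x ∧ (x, true) ∈ E₁ ∧ (x, false) ∈ E₂ ∧
    E = E₁.erase (x, true) ∪ E₂.erase (x, false) ∧ ¬ Tauto E

/-- Prefix order on variables: `v` occurs strictly before `w`. -/
def LtP (P : QPrefix V) (v w : V) : Prop :=
  ∃ i j : ℕ, i < j ∧ (∃ q : Q, P[i]? = some (q, v)) ∧ (∃ q : Q, P[j]? = some (q, w))

/-- Rule U of Q-Res: universal reduction. -/
def URed (P : QPrefix V) (F₁ F : Clause V) : Prop :=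
  ∃ l, IsUniv P l.1 ∧ l ∈ F₁ ∧ negLit l ∉ F₁ ∧ F = F₁.erase l ∧
    ∀ k ∈ F₁.erase l, IsExist P k.1 → LtP P k.1 l.1

/-- Derivability in Q-Res (rules A, R, U). -/
inductive Derives (P : QPrefix V) (φ : Cnf V) : Clause V → Prop
  | ax {C : Clause V} : C ∈ φ → Derives P φ C
  | res {E₁ E₂ E : Clause V} :
      Derives P φ E₁ → Derives P φ E₂ → ResStep P E₁ E₂ E → Derives P φ E
  | ured {F₁ F : Clause V} : Derives P φ F₁ → URed P F₁ F → Derives P φ F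

/-- Derivability in Q-Res+S (rules A, R, U, S). -/
inductive DerivesS (P : QPrefix V) (φ : Cnf V) : Clause V → Prop
  | ax {C : Clause V} : C ∈ φ → DerivesS P φ C
  | res {E₁ E₂ E : Clause V} :
      DerivesS P φ E₁ → DerivesS P φ E₂ → ResStep P E₁ E₂ E → DerivesS P φ E
  | ured {F₁ F : Clause V} : DerivesS P φ F₁ → URed P F₁ F → DerivesS P φ F
  | sym {C : Clause V} {σ : Lit V → Lit V} :
      DerivesS P φ C → IsSymmetry P φ σ → DerivesS P φ (mapClause σ C)

/-- A clause available at step `i` of a derivation sequence: an input clause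
(axiom rule A, not counted as a step) or an earlier line. -/
def Avail (φ : Cnf V) (D : List (Clause V)) (i : ℕ) (C : Clause V) : Prop :=
  C ∈ φ ∨ ∃ j, ∃ _ : j < i, ∃ hj : j < D.length, D[j]'hj = C

/-- Line `C` at position `i` is justified by rule R or U from available clauses. -/
def StepOK (P : QPrefix V) (φ : Cnf V) (D : List (Clause V)) (i : ℕ) (C : Clause V) : Prop :=
  (∃ E₁ E₂, Avail φ D i E₁ ∧ Avail φ D i E₂ ∧ ResStep P E₁ E₂ C) ∨
  (∃ F₁, Avail φ D i F₁ ∧ URed P F₁ C)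

/-- Line justified by rule R, U or the symmetry rule S. -/
def StepOKS (P : QPrefix V) (φ : Cnf V) (D : List (Clause V)) (i : ℕ) (C : Clause V) : Prop :=
  StepOK P φ D i C ∨
  (∃ F₁ σ, Avail φ D i F₁ ∧ IsSymmetry P φ σ ∧ C = mapClause σ F₁)

/-- A Q-Res refutation, as a sequence of R/U steps ending in the empty clause;
its length is the number of R and U applications. -/
def IsRefutation (P : QPrefix V) (φ : Cnf V) (D : List (Clause V)) : Prop :=
  (∀ i (hi : i < D.length), StepOK P φ D i (D[i]'hi)) ∧ D.getLast? = some (∅ : Clause V)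

/-- A Q-Res+S refutation. -/
def IsRefutationS (P : QPrefix V) (φ : Cnf V) (D : List (Clause V)) : Prop :=
  (∀ i (hi : i < D.length), StepOKS P φ D i (D[i]'hi)) ∧ D.getLast? = some (∅ : Clause V)

/-- A derivation sequence using rules A, R, U: every line is an input clause or
follows from earlier lines by R or U. -/
def IsDerivation (P : QPrefix V) (φ : Cnf V) (D : List (Clause V)) : Prop :=
  ∀ i (hi : i < D.length), (D[i]'hi) ∈ φ ∨
    (∃ j k, ∃ hj : j < i, ∃ hk : k < i,
      ResStep P (D[j]'(Nat.lt_trans hj hi)) (D[k]'(Nat.lt_trans hk hi)) (D[i]'hi)) ∨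
    (∃ j, ∃ hj : j < i, URed P (D[j]'(Nat.lt_trans hj hi)) (D[i]'hi))

/-! The KBKF formula family (variables indexed 1..n). -/

inductive KV
  | x (i : ℕ)
  | y (i : ℕ)
  | a (i : ℕ)
  | z (i : ℕ)
deriving DecidableEq

/-- Prefix ∃x₁y₁∀a₁ … ∃xₙyₙ∀aₙ ∃z₁…zₙ. -/
def kPrefix (n : ℕ) : QPrefix KV :=
  ((List.range n).flatMap
    (fun j => [(Q.ex, KV.x (j+1)), (Q.ex, KV.y (j+1)), (Q.all, KV.a (j+1))])) ++
  (List.range n).map (fun j => (Q.ex, KV.z (j+1)))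

/-- The tail z̄₁ ∨ … ∨ z̄ₙ. -/
def kZneg (n : ℕ) : Clause KV := (Finset.range n).image (fun j => ((KV.z (j+1), false) : Lit KV))

/-- The clauses of KBKF_n. -/
def kbkf (n : ℕ) : Cnf KV :=
  {({(KV.x 1, false), (KV.y 1, false)} : Clause KV)} ∪
  ((Finset.range (n-1)).image (fun j =>
    ({(KV.x (j+1), true), (KV.a (j+1), false), (KV.x (j+2), false), (KV.y (j+2), false)} : Clause KV))) ∪
  ((Finset.range (n-1)).image (fun j =>
    ({(KV.y (j+1), true), (KV.a (j+1), true), (KV.x (j+2), false), (KV.y (j+2), false)} : Clause KV))) ∪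
  {({(KV.x n, true), (KV.a n, false)} : Clause KV) ∪ kZneg n,
   ({(KV.y n, true), (KV.a n, true)} : Clause KV) ∪ kZneg n} ∪
  ((Finset.range n).image (fun j => ({(KV.a (j+1), true), (KV.z (j+1), true)} : Clause KV))) ∪
  ((Finset.range n).image (fun j => ({(KV.a (j+1), false), (KV.z (j+1), true)} : Clause KV)))

/-- The symmetry σᵢ = (xᵢ yᵢ)(x̄ᵢ ȳᵢ)(aᵢ āᵢ) of KBKF_n. -/
def kSigma (i : ℕ) : Lit KV → Lit KV
  | (KV.x j, b) => if j = i then (KV.y j, b) else (KV.x j, b)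
  | (KV.y j, b) => if j = i then (KV.x j, b) else (KV.y j, b)
  | (KV.a j, b) => if j = i then (KV.a j, !b) else (KV.a j, b)
  | (KV.z j, b) => (KV.z j, b)

/-- The symmetry breaker ψₙ = (x̄₁∨y₁) ∧ … ∧ (x̄ₙ∨yₙ) for KBKF_n. -/
def kPsi (n : ℕ) : Cnf KV :=
  (Finset.range n).image (fun j => ({(KV.x (j+1), false), (KV.y (j+1), true)} : Clause KV))

/-! The QUPARITY formula family. -/

inductive PV
  | x (i : ℕ)
  | a (i : ℕ)
  | y (i : ℕ)
deriving DecidableEq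

/-- Prefix ∃x₁…xₙ ∀a₁a₂ ∃y₂…yₙ. -/
def pPrefix (n : ℕ) : QPrefix PV :=
  (List.range n).map (fun j => ((Q.ex, PV.x (j+1)) : Q × PV)) ++
  [(Q.all, PV.a 1), (Q.all, PV.a 2)] ++
  (List.range (n-1)).map (fun k => ((Q.ex, PV.y (k+2)) : Q × PV))

/-- a₁ ∨ a₂ with sign `s` (s = true: unprimed clauses, s = false: primed clauses). -/
def pAA (s : Bool) : Clause PV := {(PV.a 1, s), (PV.a 2, s)}

/-- The clauses of QUPARITY_n. -/
def quparity (n : ℕ) : Cnf PV :=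
  ((Finset.univ : Finset Bool).biUnion (fun s =>
    ({({(PV.x 1, false), (PV.x 2, false), (PV.y 2, false)} : Clause PV) ∪ pAA s,
      ({(PV.x 1, false), (PV.x 2, true), (PV.y 2, true)} : Clause PV) ∪ pAA s,
      ({(PV.x 1, true), (PV.x 2, false), (PV.y 2, true)} : Clause PV) ∪ pAA s,
      ({(PV.x 1, true), (PV.x 2, true), (PV.y 2, false)} : Clause PV) ∪ pAA s} : Cnf PV) ∪
    ((Finset.range (n-2)).biUnion (fun k =>
      ({({(PV.y (k+2), false), (PV.x (k+3), false), (PV.y (k+3), false)} : Clause PV) ∪ pAA s,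
        ({(PV.y (k+2), false), (PV.x (k+3), true), (PV.y (k+3), true)} : Clause PV) ∪ pAA s,
        ({(PV.y (k+2), true), (PV.x (k+3), false), (PV.y (k+3), true)} : Clause PV) ∪ pAA s,
        ({(PV.y (k+2), true), (PV.x (k+3), true), (PV.y (k+3), false)} : Clause PV) ∪ pAA s} : Cnf PV))))) ∪
  {({(PV.a 1, true), (PV.a 2, true), (PV.y n, true)} : Clause PV),
   ({(PV.a 1, false), (PV.a 2, false), (PV.y n, false)} : Clause PV)}

/-- The symmetry σ₁ = (x₁ x₂)(x̄₁ x̄₂) of QUPARITY_n. -/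
def pSigma1 : Lit PV → Lit PV
  | (PV.x 1, b) => (PV.x 2, b)
  | (PV.x 2, b) => (PV.x 1, b)
  | l => l

/-- The symmetry σᵢ = (xᵢ x̄ᵢ)(a₁ ā₁)(a₂ ā₂)(yᵢ ȳᵢ)⋯(yₙ ȳₙ) of QUPARITY_n, 2 ≤ i ≤ n. -/
def pSigma (n i : ℕ) : Lit PV → Lit PV
  | (PV.x j, b) => if j = i then (PV.x j, !b) else (PV.x j, b)
  | (PV.a j, b) => if j = 1 ∨ j = 2 then (PV.a j, !b) else (PV.a j, b)
  | (PV.y j, b) => if i ≤ j ∧ j ≤ n then (PV.y j, !b) else (PV.y j, b)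

/-- The symmetry breaker ψₙ = (x̄₁ ∨ x₂) ∧ x̄₂ ∧ … ∧ x̄ₙ for QUPARITY_n. -/
def pPsi (n : ℕ) : Cnf PV :=
  {({(PV.x 1, false), (PV.x 2, true)} : Clause PV)} ∪
  (Finset.range (n-1)).image (fun k => ({(PV.x (k+2), false)} : Clause PV))

/-! The modified family KBKF'_n with blocking universal variables b_j. -/

inductive KV2
  | x (i : ℕ)
  | b (i : ℕ)
  | y (i : ℕ)
  | a (i : ℕ)
  | z (i : ℕ)
deriving DecidableEq

/-- Prefix ∃x₁∀b₁∃y₁∀a₁ … ∃xₙ∀bₙ∃yₙ∀aₙ ∃z₁…zₙ of KBKF'_n. -/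
def k2Prefix (n : ℕ) : QPrefix KV2 :=
  ((List.range n).flatMap
    (fun j => [(Q.ex, KV2.x (j+1)), (Q.all, KV2.b (j+1)),
               (Q.ex, KV2.y (j+1)), (Q.all, KV2.a (j+1))])) ++
  (List.range n).map (fun j => (Q.ex, KV2.z (j+1)))

/-- The map σᵢ = (xᵢ yᵢ)(x̄ᵢ ȳᵢ)(aᵢ āᵢ) on the literals of KBKF'_n. -/
def k2Sigma (i : ℕ) : Lit KV2 → Lit KV2
  | (KV2.x j, c) => if j = i then (KV2.y j, c) else (KV2.x j, c)
  | (KV2.y j, c) => if j = i then (KV2.x j, c) else (KV2.y j, c)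
  | (KV2.a j, c) => if j = i then (KV2.a j, !c) else (KV2.a j, c)
  | (KV2.b j, c) => (KV2.b j, c)
  | (KV2.z j, c) => (KV2.z j, c)


namespace KBKFProof

/-- One quantifier block of the KBKF prefix. -/
def kBlock (j : ℕ) : QPrefix KV :=
  [(Q.ex, KV.x (j+1)), (Q.ex, KV.y (j+1)), (Q.all, KV.a (j+1))]

lemma exList_elim {V : Type} [DecidableEq V] :
    ∀ (l : List V) (τ : V → Bool) (M : (V → Bool) → Prop),
      QTrue (l.map (fun v => ((Q.ex, v) : Q × V))) τ M →
      ∃ τ', (∀ w, w ∉ l → τ' w = τ w) ∧ M τ' := by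
  intro l
  induction l with
  | nil => exact fun τ M h => ⟨τ, fun _ _ => rfl, h⟩
  | cons v t ih =>
    intro τ M h
    obtain ⟨b, hb⟩ := h
    obtain ⟨τ', hτ', hM⟩ := ih _ _ hb
    refine ⟨τ', fun w hw => ?_, hM⟩
    have hwv : w ≠ v := fun e => hw (e ▸ List.mem_cons_self ..)
    have hwt : w ∉ t := fun h' => hw (List.mem_cons_of_mem _ h')
    rw [hτ' w hwt, Function.update_apply, if_neg hwv]

lemma mem_C1 (n : ℕ) :
    ({(KV.x 1, false), (KV.y 1, false)} : Clause KV) ∈ kbkf n := by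
  simp only [kbkf, Finset.mem_union]
  exact Or.inl (Or.inl (Or.inl (Or.inl (Or.inl (Finset.mem_singleton_self _)))))

lemma mem_C2 (n k : ℕ) (hk : k < n - 1) :
    ({(KV.x (k+1), true), (KV.a (k+1), false), (KV.x (k+2), false), (KV.y (k+2), false)} :
      Clause KV) ∈ kbkf n := by
  simp only [kbkf, Finset.mem_union]
  exact Or.inl (Or.inl (Or.inl (Or.inl (Or.inr
    (Finset.mem_image.2 ⟨k, Finset.mem_range.2 hk, rfl⟩)))))

lemma mem_C3 (n k : ℕ) (hk : k < n - 1) :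
    ({(KV.y (k+1), true), (KV.a (k+1), true), (KV.x (k+2), false), (KV.y (k+2), false)} :
      Clause KV) ∈ kbkf n := by
  simp only [kbkf, Finset.mem_union]
  exact Or.inl (Or.inl (Or.inl (Or.inr
    (Finset.mem_image.2 ⟨k, Finset.mem_range.2 hk, rfl⟩))))

lemma mem_Cx (n : ℕ) :
    (({(KV.x n, true), (KV.a n, false)} : Clause KV) ∪ kZneg n) ∈ kbkf n := by
  simp only [kbkf, Finset.mem_union]
  exact Or.inl (Or.inl (Or.inr (Finset.mem_insert_self _ _)))

lemma mem_Cy (n : ℕ) :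
    (({(KV.y n, true), (KV.a n, true)} : Clause KV) ∪ kZneg n) ∈ kbkf n := by
  simp only [kbkf, Finset.mem_union]
  exact Or.inl (Or.inl (Or.inr (Finset.mem_insert.2 (Or.inr (Finset.mem_singleton_self _)))))

lemma mem_B1 (n k : ℕ) (hk : k < n) :
    ({(KV.a (k+1), true), (KV.z (k+1), true)} : Clause KV) ∈ kbkf n := by
  simp only [kbkf, Finset.mem_union]
  exact Or.inl (Or.inr (Finset.mem_image.2 ⟨k, Finset.mem_range.2 hk, rfl⟩))

lemma mem_B2 (n k : ℕ) (hk : k < n) :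
    ({(KV.a (k+1), false), (KV.z (k+1), true)} : Clause KV) ∈ kbkf n := by
  simp only [kbkf, Finset.mem_union]
  exact Or.inr (Finset.mem_image.2 ⟨k, Finset.mem_range.2 hk, rfl⟩)

/-- Under the adversary strategy `a_k = ¬ x_k`, the matrix is unsatisfiable. -/
lemma matrix_unsat (n : ℕ) (hn : 1 ≤ n) (τ : KV → Bool)
    (ha : ∀ k, k < n → τ (KV.a (k+1)) = !τ (KV.x (k+1)))
    (hs : SatCnf τ (kbkf n)) : False := by
  -- Step 1: all z's are true.
  have hz : ∀ k, k < n → τ (KV.z (k+1)) = true := by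
    intro k hk
    cases hA : τ (KV.a (k+1)) with
    | false =>
      obtain ⟨l, hl, he⟩ := hs _ (mem_B1 n k hk)
      simp only [Finset.mem_insert, Finset.mem_singleton] at hl
      rcases hl with rfl | rfl
      · simp [evalLit, hA] at he
      · simpa [evalLit] using he
    | true =>
      obtain ⟨l, hl, he⟩ := hs _ (mem_B2 n k hk)
      simp only [Finset.mem_insert, Finset.mem_singleton] at hl
      rcases hl with rfl | rfl
      · simp [evalLit, hA] at he
      · simpa [evalLit] using he
  -- Step 2: downward induction forcing x_{k+1} and y_{k+1} true.
  have key : ∀ d k, k + 1 + d = n →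
      τ (KV.x (k+1)) = true ∧ τ (KV.y (k+1)) = true := by
    intro d
    induction d with
    | zero =>
      intro k hk
      simp only [Nat.add_zero] at hk
      subst hk
      have hk' : k < k + 1 := by omega
      have hax : τ (KV.x (k+1)) = true := by
        obtain ⟨l, hl, he⟩ := hs _ (mem_Cx (k+1))
        rw [Finset.mem_union] at hl
        rcases hl with hl | hl
        · simp only [Finset.mem_insert, Finset.mem_singleton] at hl
          rcases hl with rfl | rfl
          · simpa [evalLit] using he
          · rw [evalLit] at he
            simp only at he
            rw [ha k hk'] at he
            simpa using he
        · obtain ⟨j, hj, rfl⟩ := Finset.mem_image.1 hl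
          rw [evalLit] at he
          simp only at he
          rw [hz j (Finset.mem_range.1 hj)] at he
          simp at he
      have hay : τ (KV.y (k+1)) = true := by
        obtain ⟨l, hl, he⟩ := hs _ (mem_Cy (k+1))
        rw [Finset.mem_union] at hl
        rcases hl with hl | hl
        · simp only [Finset.mem_insert, Finset.mem_singleton] at hl
          rcases hl with rfl | rfl
          · simpa [evalLit] using he
          · rw [evalLit] at he
            simp only at he
            rw [ha k hk', hax] at he
            simp at he
        · obtain ⟨j, hj, rfl⟩ := Finset.mem_image.1 hl
          rw [evalLit] at he
          simp only at he
          rw [hz j (Finset.mem_range.1 hj)] at he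
          simp at he
      exact ⟨hax, hay⟩
    | succ d ih =>
      intro k hk
      obtain ⟨hx2, hy2⟩ := ih (k+1) (by omega)
      have hk1 : k < n - 1 := by omega
      have hk' : k < n := by omega
      have hax : τ (KV.x (k+1)) = true := by
        obtain ⟨l, hl, he⟩ := hs _ (mem_C2 n k hk1)
        simp only [Finset.mem_insert, Finset.mem_singleton] at hl
        rcases hl with rfl | rfl | rfl | rfl
        · simpa [evalLit] using he
        · rw [evalLit] at he; simp only at he
          rw [ha k hk'] at he; simpa using he
        · rw [evalLit] at he; simp only at he
          rw [hx2] at he; simp at he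
        · rw [evalLit] at he; simp only at he
          rw [hy2] at he; simp at he
      have hay : τ (KV.y (k+1)) = true := by
        obtain ⟨l, hl, he⟩ := hs _ (mem_C3 n k hk1)
        simp only [Finset.mem_insert, Finset.mem_singleton] at hl
        rcases hl with rfl | rfl | rfl | rfl
        · simpa [evalLit] using he
        · rw [evalLit] at he; simp only at he
          rw [ha k hk', hax] at he; simp at he
        · rw [evalLit] at he; simp only at he
          rw [hx2] at he; simp at he
        · rw [evalLit] at he; simp only at he
          rw [hy2] at he; simp at he
      exact ⟨hax, hay⟩
  obtain ⟨hx1, hy1⟩ := key (n-1) 0 (by omega)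
  obtain ⟨l, hl, he⟩ := hs _ (mem_C1 n)
  simp only [Finset.mem_insert, Finset.mem_singleton] at hl
  rcases hl with rfl | rfl
  · rw [evalLit] at he; simp only at he; rw [hx1] at he; simp at he
  · rw [evalLit] at he; simp only at he; rw [hy1] at he; simp at he

lemma main (n : ℕ) (hn : 1 ≤ n) :
    ∀ m j, j + m = n → ∀ τ : KV → Bool,
      (∀ k, k < j → τ (KV.a (k+1)) = !τ (KV.x (k+1))) →
      ¬ QTrue ((List.range' j m).flatMap
            (fun j => [(Q.ex, KV.x (j+1)), (Q.ex, KV.y (j+1)), (Q.all, KV.a (j+1))]) ++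
          (List.range' 0 n).map (fun j => ((Q.ex, KV.z (j+1)) : Q × KV))) τ
        (fun τ => SatCnf τ (kbkf n)) := by
  intro m
  induction m with
  | zero =>
    intro j hj τ hinv h
    simp only [List.range', List.flatMap_nil, List.nil_append] at h
    rw [show (List.range' 0 n).map (fun j => ((Q.ex, KV.z (j+1)) : Q × KV)) =
        ((List.range' 0 n).map (fun j => KV.z (j+1))).map (fun v => ((Q.ex, v) : Q × KV))
      from (List.map_map ..).symm] at h
    obtain ⟨τ', hτ', hM⟩ := exList_elim _ _ _ h
    have hax : ∀ k, k < n → τ' (KV.a (k+1)) = !τ' (KV.x (k+1)) := by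
      intro k hk
      have h1 : τ' (KV.a (k+1)) = τ (KV.a (k+1)) := hτ' _ (by simp)
      have h2 : τ' (KV.x (k+1)) = τ (KV.x (k+1)) := hτ' _ (by simp)
      rw [h1, h2]; exact hinv k (by omega)
    exact matrix_unsat n hn τ' hax hM
  | succ m ih =>
    intro j hj τ hinv h
    rw [List.range'_succ] at h
    obtain ⟨bx, by', hb⟩ := h
    have h3 := hb (!bx)
    refine ih (j+1) (by omega) _ ?_ h3
    intro k hk
    by_cases hkj : k = j
    · subst hkj
      rw [Function.update_apply, Function.update_apply, Function.update_apply,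
          Function.update_apply, Function.update_apply, Function.update_apply]
      simp
    · have hk' : k < j := by omega
      have e1 : KV.a (k+1) ≠ KV.a (j+1) := by simp; omega
      have e2 : KV.a (k+1) ≠ KV.y (j+1) := by simp
      have e3 : KV.a (k+1) ≠ KV.x (j+1) := by simp
      have f1 : KV.x (k+1) ≠ KV.a (j+1) := by simp
      have f2 : KV.x (k+1) ≠ KV.y (j+1) := by simp
      have f3 : KV.x (k+1) ≠ KV.x (j+1) := by simp; omega
      rw [Function.update_apply, if_neg e1, Function.update_apply, if_neg e2,
          Function.update_apply, if_neg e3, Function.update_apply, if_neg f1,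
          Function.update_apply, if_neg f2, Function.update_apply, if_neg f3]
      exact hinv k hk'

end KBKFProof

/-- KBKF_n is false for every n ≥ 1. -/
theorem kbkf_false : ∀ n : ℕ, 1 ≤ n → ¬ QBFTrue (kPrefix n) (kbkf n) := by
  intro n hn h
  rw [QBFTrue, kPrefix, List.range_eq_range'] at h
  exact KBKFProof.main n hn n 0 (by omega) _ (by omega) h
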